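/- arXiv:1603.04393 — 5 statements merged into one kernel-verified Lean document; each statement's English description precedes it below -/
import Mathlib

section
/- Define the three maps on data (a₁,a₂,a₃,a₄,σ,y,z) ∈ ℂ⁷ (with t ∈ ℂ a fixed nonzero parameter, assuming all denominators appearing are nonzero): S₁ : (a₁,a₂,a₃,a₄,σ,y,z) ↦ (−a₁−σ, −a₂−σ, −a₃−σ, −a₄−σ, σ−1, (t/y)·(z−a₃)(z−a₄)/((z−a₁)(z−a₂)), −σ−z); S₂ : (a₁,a₂,a₃,a₄,σ,y,z) ↦ (a₁, a₂, −a₃−σ−1, −a₄−σ−1, σ, y, z + t(1+σ+a₃+a₄)/(y−t)); S₃ : (a₁,a₂,a₃,a₄,σ,y,z) ↦ (−a₁−σ, −a₂−σ, a₃, a₄, σ, y, z − (σ+a₁+a₂)y/(y−1)). Then the composition S₂ ∘ S₃ ∘ S₁ sends (a₁,a₂,a₃,a₄,σ,y,z) to (a₁+1, a₂+1, a₃, a₄, σ−1, ỹ, z̃), where ỹ and z̃ satisfy: y·ỹ = t(z−a₃)(z−a₄)/((z−a₁)(z−a₂)) and z̃ + z = a₁+a₂+1 − (a₃t+a₄t+σt)/(ỹ−t)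 + (a₁+a₂+σ+1)/(ỹ−1). -/
/-- The symmetry `S₁` of the symmetric Lax pair for Painlevé VI. -/
noncomputable def S1 (t : ℂ) : ℂ × ℂ × ℂ × ℂ × ℂ × ℂ × ℂ → ℂ × ℂ × ℂ × ℂ × ℂ × ℂ × ℂ :=
  fun (a1, a2, a3, a4, σ, y, z) =>
    (-a1 - σ, -a2 - σ, -a3 - σ, -a4 - σ, σ - 1,
      t / y * ((z - a3) * (z - a4) / ((z - a1) * (z - a2))), -σ - z)

/-- The symmetry `S₂`. -/
noncomputable def S2 (t : ℂ) : ℂ × ℂ × ℂ × ℂ × ℂ × ℂ × ℂ → ℂ × ℂ × ℂ × ℂ × ℂ × ℂ × ℂ :=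
  fun (a1, a2, a3, a4, σ, y, z) =>
    (a1, a2, -a3 - σ - 1, -a4 - σ - 1, σ, y,
      z + t * (1 + σ + a3 + a4) / (y - t))

/-- The symmetry `S₃`. -/
noncomputable def S3 (_t : ℂ) : ℂ × ℂ × ℂ × ℂ × ℂ × ℂ × ℂ → ℂ × ℂ × ℂ × ℂ × ℂ × ℂ × ℂ :=
  fun (a1, a2, a3, a4, σ, y, z) =>
    (-a1 - σ, -a2 - σ, a3, a4, σ, y, z - (σ + a1 + a2) * y / (y - 1))

/-- the composition `S₂ ∘ S₃ ∘ S₁` is the discrete Painlevé V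
evolution. -/
theorem stmt_8 (t a1 a2 a3 a4 σ y z ytil : ℂ)
    (ht : t ≠ 0) (hy : y ≠ 0) (h1 : z - a1 ≠ 0) (h2 : z - a2 ≠ 0)
    (hytil : ytil = t / y * ((z - a3) * (z - a4) / ((z - a1) * (z - a2))))
    (hyt : ytil - t ≠ 0) (hy1 : ytil - 1 ≠ 0) :
    ∃ ztil : ℂ,
      S2 t (S3 t (S1 t (a1, a2, a3, a4, σ, y, z))) =
        (a1 + 1, a2 + 1, a3, a4, σ - 1, ytil, ztil) ∧
      y * ytil = t * (z - a3) * (z - a4) / ((z - a1) * (z - a2)) ∧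
      ztil + z = a1 + a2 + 1 - (a3 * t + a4 * t + σ * t) / (ytil - t)
        + (a1 + a2 + σ + 1) / (ytil - 1) := by
  refine ⟨-σ - z + (1 + a1 + a2 + σ) * ytil / (ytil - 1)
      - (a3 + a4 + σ) * t / (ytil - t), ?_, ?_, ?_⟩
  · simp only [S1, S2, S3, Prod.mk.injEq]
    rw [← hytil]
    refine ⟨by ring, by ring, by ring, by ring, trivial, rfl, by ring⟩
  · rw [hytil]
    field_simp
  · field_simp
    ring
end

section
/- Let a₁, a₂, a₃, a₄, σ, t ∈ ℂ with t ∉ {0,1}, and let y, z : I → ℂ be differentiable functions on a real interval I (where t varies over I, i.e. t is the independent variable), with y(t) ∉ {0, 1, t} for all t. Set ζ₁ = a₁+a₂+a₃+a₄, y₁ = (z−a₁)(z−a₂)·y, y₂ = t(z−a₃)(z−a₄)/y. Suppose z' = (y₁ − y₂)/(t(t−1)) and y' = (y²(a₁+a₂−2z) + t(a₃+a₄−2z) + y(σ − t(ζ₁+σ−2z) + 2z))/(t(t−1)). Then y satisfies the sixth Painlevé equation y'' = (1/2)(1/y + 1/(y−1) + 1/(y−t))(y')² − (1/t + 1/(t−1)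 + 1/(y−t))y' + (y(y−1)(y−t)/(t²(t−1)²))·(α + βt/y² + γ(t−1)/(y−1)² + δt(t−1)/(y−t)²), with α = (a₁−a₂)²/2, β = −(a₃−a₄)²/2, γ = (a₁+a₂+σ)²/2, δ = −(a₃+a₄+σ)(2+a₃+a₄+σ)/2. -/
set_option maxHeartbeats 4000000 in
private lemma stmt_9_alg (a1 a2 a3 a4 σ T Y Z dy dz : ℂ) (hT0 : T ≠ 0) (hT1 : T - 1 ≠ 0)
    (hY0 : Y ≠ 0) (hY1 : Y - 1 ≠ 0) (hYT : Y - T ≠ 0)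
    (hdy : dy = (Y^2 * (a1 + a2 - 2 * Z) + T * (a3 + a4 - 2 * Z)
        + Y * (σ - T * ((a1 + a2 + a3 + a4) + σ - 2 * Z) + 2 * Z)) / (T * (T - 1)))
    (hdz : dz = ((Z - a1) * (Z - a2) * Y - T * (Z - a3) * (Z - a4) / Y) / (T * (T - 1))) :
    ((((dy * Y + Y * dy) * (a1 + a2 - 2 * Z) + Y * Y * (0 - 2 * dz)
        + (1 * (a3 + a4 - 2 * Z) + T * (0 - 2 * dz)))
      + (dy * (σ - T * ((a1 + a2 + a3 + a4) + σ - 2 * Z) + 2 * Z)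
        + Y * ((0 - (1 * ((a1 + a2 + a3 + a4) + σ - 2 * Z) + T * (0 - 2 * dz))) + 2 * dz)))
        * (T * (T - 1))
      - (Y * Y * (a1 + a2 - 2 * Z) + T * (a3 + a4 - 2 * Z)
        + Y * (σ - T * ((a1 + a2 + a3 + a4) + σ - 2 * Z) + 2 * Z))
        * (1 * (T - 1) + T * (1 - 0))) / (T * (T - 1))^2
    = (1/2) * (1 / Y + 1 / (Y - 1) + 1 / (Y - T)) * dy^2
      - (1 / T + 1 / (T - 1) + 1 / (Y - T)) * dy
      + (Y * (Y - 1) * (Y - T) / ((T - 1)^2 * T^2)) *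
        ((a1 - a2)^2 / 2
          + (-(a3 - a4)^2 / 2) * T / Y^2
          + ((a1 + a2 + σ)^2 / 2) * (T - 1) / (Y - 1)^2
          + (-((a3 + a4 + σ) * (2 + a3 + a4 + σ)) / 2) * (T - 1) * T / (Y - T)^2) := by
  have hDt : T * (T - 1) ≠ 0 := mul_ne_zero hT0 hT1
  have hM : (2*Y^2*(Y-1)^2*(Y-T)^2*T^2*(T-1)^2 : ℂ) ≠ 0 := by
    apply mul_ne_zero; apply mul_ne_zero; apply mul_ne_zero; apply mul_ne_zero; apply mul_ne_zero
    · norm_num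
    all_goals exact pow_ne_zero 2 (by assumption)
  have h1 : dy * (T * (T - 1)) = Y^2 * (a1 + a2 - 2 * Z) + T * (a3 + a4 - 2 * Z)
      + Y * (σ - T * ((a1 + a2 + a3 + a4) + σ - 2 * Z) + 2 * Z) := by
    rw [hdy, div_mul_cancel₀ _ hDt]
  have h2 : dz * (T * (T - 1)) * Y = (Z - a1) * (Z - a2) * Y * Y - T * (Z - a3) * (Z - a4) := by
    rw [hdz]; field_simp
  have hR : (1/2) * (1 / Y + 1 / (Y - 1) + 1 / (Y - T)) * dy^2
      - (1 / T + 1 / (T - 1) + 1 / (Y - T)) * dy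
      + (Y * (Y - 1) * (Y - T) / ((T - 1)^2 * T^2)) *
        ((a1 - a2)^2 / 2
          + (-(a3 - a4)^2 / 2) * T / Y^2
          + ((a1 + a2 + σ)^2 / 2) * (T - 1) / (Y - 1)^2
          + (-((a3 + a4 + σ) * (2 + a3 + a4 + σ)) / 2) * (T - 1) * T / (Y - T)^2)
      = ((-2)*T*Y^2*dy*(T-1)^2*(Y-1)^2*(Y-T)^2 + T^2*Y*dy^2*(T-1)^2*(Y-1)^2*(Y-T)^2 + (-2)*T^2*Y^2*dy*(T-1)*(Y-1)^2*(Y-T)^2 + (-2)*T^2*Y^2*dy*(T-1)^2*(Y-1)^2*(Y-T) + T^2*Y^2*dy^2*(T-1)^2*(Y-1)*(Y-T)^2 + T^2*Y^2*dy^2*(T-1)^2*(Y-1)^2*(Y-T) + (-2)*σ*T*Y^3*(T-1)*(Y-1)^3*(Y-T) + σ^2*Y^3*(T-1)*(Y-1)*(Y-T)^3 + (-1)*σ^2*T*Y^3*(T-1)*(Y-1)^3*(Y-T) + (-2)*a4*T*Y^3*(T-1)*(Y-1)^3*(Y-T) + (-2)*a4*σ*T*Y^3*(T-1)*(Y-1)^3*(Y-T)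 + (-1)*a4^2*T*Y*(Y-1)^3*(Y-T)^3 + (-1)*a4^2*T*Y^3*(T-1)*(Y-1)^3*(Y-T) + (-2)*a3*T*Y^3*(T-1)*(Y-1)^3*(Y-T) + (-2)*a3*σ*T*Y^3*(T-1)*(Y-1)^3*(Y-T) + (2)*a3*a4*T*Y*(Y-1)^3*(Y-T)^3 + (-2)*a3*a4*T*Y^3*(T-1)*(Y-1)^3*(Y-T) + (-1)*a3^2*T*Y*(Y-1)^3*(Y-T)^3 + (-1)*a3^2*T*Y^3*(T-1)*(Y-1)^3*(Y-T) + (2)*a2*σ*Y^3*(T-1)*(Y-1)*(Y-T)^3 + a2^2*Y^3*(Y-1)^3*(Y-T)^3 + a2^2*Y^3*(T-1)*(Y-1)*(Y-T)^3 + (2)*a1*σ*Y^3*(T-1)*(Y-1)*(Y-T)^3 + (-2)*a1*a2*Y^3*(Y-1)^3*(Y-T)^3 + (2)*a1*a2*Y^3*(T-1)*(Y-1)*(Y-T)^3 + a1^2*Y^3*(Y-1)^3*(Y-T)^3 + a1^2*Y^3*(T-1)*(Y-1)*(Y-T)^3)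
        / (2*Y^2*(Y-1)^2*(Y-T)^2*T^2*(T-1)^2) := by
    rw [eq_div_iff hM]
    field_simp
    ring
  rw [hR, div_eq_div_iff (pow_ne_zero 2 hDt) hM]
  linear_combination (((2)*T^3*Y^3 + (-5)*T^3*Y^4 + (3)*T^3*Y^5 + (-3)*T^4*Y^2 + (2)*T^4*Y^3 + (10)*T^4*Y^4 + (-9)*T^4*Y^5 + T^5*Y + (6)*T^5*Y^2 + (-16)*T^5*Y^3 + (9)*T^5*Y^5 + (-3)*T^6*Y + (16)*T^6*Y^3 + (-10)*T^6*Y^4 + (-3)*T^6*Y^5 + (3)*T^7*Y + (-6)*T^7*Y^2 + (-2)*T^7*Y^3 + (5)*T^7*Y^4 + (-1)*T^8*Y + (3)*T^8*Y^2 + (-2)*T^8*Y^3) * dy + ((-2)*T^2*Y^4 + (4)*T^2*Y^5 + (-2)*T^2*Y^5*Z + (-2)*T^2*Y^6 + (4)*T^2*Y^6*Z + (-2)*T^2*Y^7*Z + (2)*T^3*Y^3 + (2)*T^3*Y^3*Z + (4)*T^3*Y^4 + (-14)*T^3*Y^5 + (-2)*T^3*Y^5*Z + (8)*T^3*Y^6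 + (-4)*T^3*Y^6*Z + (4)*T^3*Y^7*Z + (-4)*T^4*Y^2*Z + (-10)*T^4*Y^3 + (2)*T^4*Y^3*Z + (10)*T^4*Y^4 + (10)*T^4*Y^5 + (8)*T^4*Y^5*Z + (-10)*T^4*Y^6 + (-4)*T^4*Y^6*Z + (-2)*T^4*Y^7*Z + (2)*T^5*Y*Z + (2)*T^5*Y^2 + (4)*T^5*Y^2*Z + (10)*T^5*Y^3 + (-8)*T^5*Y^3*Z + (-22)*T^5*Y^4 + (6)*T^5*Y^5 + (-2)*T^5*Y^5*Z + (4)*T^5*Y^6 + (4)*T^5*Y^6*Z + (-4)*T^6*Y*Z + (-4)*T^6*Y^2 + (4)*T^6*Y^2*Z + (2)*T^6*Y^3 + (2)*T^6*Y^3*Z + (8)*T^6*Y^4 + (-6)*T^6*Y^5 + (-2)*T^6*Y^5*Z + (2)*T^7*Y*Z + (2)*T^7*Y^2 + (-4)*T^7*Y^2*Z + (-4)*T^7*Y^3 + (2)*T^7*Y^3*Z + (2)*T^7*Y^4 + σ*T^2*Y^5 + (-1)*σ*T^2*Y^6 + (-1)*σ*T^3*Y^3 + (-2)*σ*T^3*Y^5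 + (3)*σ*T^3*Y^6 + σ*T^4*Y^2 + (2)*σ*T^4*Y^3 + (-3)*σ*T^4*Y^6 + (-3)*σ*T^5*Y^2 + (2)*σ*T^5*Y^5 + σ*T^5*Y^6 + (3)*σ*T^6*Y^2 + (-2)*σ*T^6*Y^3 + (-1)*σ*T^6*Y^5 + (-1)*σ*T^7*Y^2 + σ*T^7*Y^3 + (-2)*a4*T^3*Y^3 + (5)*a4*T^3*Y^4 + (-4)*a4*T^3*Y^5 + a4*T^3*Y^6 + (3)*a4*T^4*Y^2 + (-3)*a4*T^4*Y^3 + (-5)*a4*T^4*Y^4 + (7)*a4*T^4*Y^5 + (-2)*a4*T^4*Y^6 + (-1)*a4*T^5*Y + (-4)*a4*T^5*Y^2 + (11)*a4*T^5*Y^3 + (-5)*a4*T^5*Y^4 + (-2)*a4*T^5*Y^5 + a4*T^5*Y^6 + (2)*a4*T^6*Y + (-1)*a4*T^6*Y^2 + (-5)*a4*T^6*Y^3 + (5)*a4*T^6*Y^4 + (-1)*a4*T^6*Y^5 + (-1)*a4*T^7*Y + (2)*a4*T^7*Y^2 + (-1)*a4*T^7*Y^3 + (-2)*a3*T^3*Y^3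 + (5)*a3*T^3*Y^4 + (-4)*a3*T^3*Y^5 + a3*T^3*Y^6 + (3)*a3*T^4*Y^2 + (-3)*a3*T^4*Y^3 + (-5)*a3*T^4*Y^4 + (7)*a3*T^4*Y^5 + (-2)*a3*T^4*Y^6 + (-1)*a3*T^5*Y + (-4)*a3*T^5*Y^2 + (11)*a3*T^5*Y^3 + (-5)*a3*T^5*Y^4 + (-2)*a3*T^5*Y^5 + a3*T^5*Y^6 + (2)*a3*T^6*Y + (-1)*a3*T^6*Y^2 + (-5)*a3*T^6*Y^3 + (5)*a3*T^6*Y^4 + (-1)*a3*T^6*Y^5 + (-1)*a3*T^7*Y + (2)*a3*T^7*Y^2 + (-1)*a3*T^7*Y^3 + (2)*a2*T^2*Y^5 + (-3)*a2*T^2*Y^6 + a2*T^2*Y^7 + (-5)*a2*T^3*Y^4 + (3)*a2*T^3*Y^5 + (4)*a2*T^3*Y^6 + (-2)*a2*T^3*Y^7 + (4)*a2*T^4*Y^3 + (5)*a2*T^4*Y^4 + (-11)*a2*T^4*Y^5 + a2*T^4*Y^6 + a2*T^4*Y^7 + (-1)*a2*T^5*Y^2 + (-7)*a2*T^5*Y^3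 + (5)*a2*T^5*Y^4 + (5)*a2*T^5*Y^5 + (-2)*a2*T^5*Y^6 + (2)*a2*T^6*Y^2 + (2)*a2*T^6*Y^3 + (-5)*a2*T^6*Y^4 + a2*T^6*Y^5 + (-1)*a2*T^7*Y^2 + a2*T^7*Y^3 + (2)*a1*T^2*Y^5 + (-3)*a1*T^2*Y^6 + a1*T^2*Y^7 + (-5)*a1*T^3*Y^4 + (3)*a1*T^3*Y^5 + (4)*a1*T^3*Y^6 + (-2)*a1*T^3*Y^7 + (4)*a1*T^4*Y^3 + (5)*a1*T^4*Y^4 + (-11)*a1*T^4*Y^5 + a1*T^4*Y^6 + a1*T^4*Y^7 + (-1)*a1*T^5*Y^2 + (-7)*a1*T^5*Y^3 + (5)*a1*T^5*Y^4 + (5)*a1*T^5*Y^5 + (-2)*a1*T^5*Y^6 + (2)*a1*T^6*Y^2 + (2)*a1*T^6*Y^3 + (-5)*a1*T^6*Y^4 + a1*T^6*Y^5 + (-1)*a1*T^7*Y^2 + a1*T^7*Y^3)) * h1 + ((4)*T^2*Y^4 + (-12)*T^2*Y^5 + (12)*T^2*Y^6 + (-4)*T^2*Y^7 + (-12)*T^3*Y^3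 + (28)*T^3*Y^4 + (-12)*T^3*Y^5 + (-12)*T^3*Y^6 + (8)*T^3*Y^7 + (12)*T^4*Y^2 + (-12)*T^4*Y^3 + (-32)*T^4*Y^4 + (48)*T^4*Y^5 + (-12)*T^4*Y^6 + (-4)*T^4*Y^7 + (-4)*T^5*Y + (-12)*T^5*Y^2 + (48)*T^5*Y^3 + (-32)*T^5*Y^4 + (-12)*T^5*Y^5 + (12)*T^5*Y^6 + (8)*T^6*Y + (-12)*T^6*Y^2 + (-12)*T^6*Y^3 + (28)*T^6*Y^4 + (-12)*T^6*Y^5 + (-4)*T^7*Y + (12)*T^7*Y^2 + (-12)*T^7*Y^3 + (4)*T^7*Y^4) * h2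


set_option maxHeartbeats 1000000 in
/-- eliminating `z` from the isomonodromy system of the symmetric
Lax pair yields the sixth Painlevé equation. -/
theorem stmt_9 (a1 a2 a3 a4 σ : ℂ) (I : Set ℝ) (hI : IsOpen I) (y z : ℝ → ℂ)
    (hyd : ∀ t ∈ I, DifferentiableAt ℝ y t)
    (hzd : ∀ t ∈ I, DifferentiableAt ℝ z t)
    (ht0 : ∀ t ∈ I, (t : ℂ) ≠ 0) (ht1 : ∀ t ∈ I, (t : ℂ) ≠ 1)
    (hy0 : ∀ t ∈ I, y t ≠ 0) (hy1 : ∀ t ∈ I, y t ≠ 1)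
    (hyt : ∀ t ∈ I, y t ≠ (t : ℂ))
    (hz' : ∀ t ∈ I, deriv z t =
      ((z t - a1) * (z t - a2) * y t - (t : ℂ) * (z t - a3) * (z t - a4) / y t)
        / ((t : ℂ) * ((t : ℂ) - 1)))
    (hy' : ∀ t ∈ I, deriv y t =
      ((y t)^2 * (a1 + a2 - 2 * z t) + (t : ℂ) * (a3 + a4 - 2 * z t)
        + y t * (σ - (t : ℂ) * ((a1 + a2 + a3 + a4) + σ - 2 * z t) + 2 * z t))
        / ((t : ℂ) * ((t : ℂ) - 1))) :
    ∀ t ∈ I, deriv (deriv y) t =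
      (1/2) * (1 / y t + 1 / (y t - 1) + 1 / (y t - (t : ℂ))) * (deriv y t)^2
      - (1 / (t : ℂ) + 1 / ((t : ℂ) - 1) + 1 / (y t - (t : ℂ))) * deriv y t
      + (y t * (y t - 1) * (y t - (t : ℂ)) / (((t : ℂ) - 1)^2 * (t : ℂ)^2)) *
        ((a1 - a2)^2 / 2
          + (-(a3 - a4)^2 / 2) * (t : ℂ) / (y t)^2
          + ((a1 + a2 + σ)^2 / 2) * ((t : ℂ) - 1) / (y t - 1)^2
          + (-((a3 + a4 + σ) * (2 + a3 + a4 + σ)) / 2) * ((t : ℂ) - 1) * (t : ℂ)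
              / (y t - (t : ℂ))^2) := by
  intro t ht
  have hT0 := ht0 t ht
  have hT1 : ((t : ℂ) - 1) ≠ 0 := sub_ne_zero.mpr (ht1 t ht)
  have hY0 := hy0 t ht
  have hY1 : y t - 1 ≠ 0 := sub_ne_zero.mpr (hy1 t ht)
  have hYT : y t - (t : ℂ) ≠ 0 := sub_ne_zero.mpr (hyt t ht)
  have hDt : (t : ℂ) * ((t : ℂ) - 1) ≠ 0 := mul_ne_zero hT0 hT1
  have hy := (hyd t ht).hasDerivAt
  have hz := (hzd t ht).hasDerivAt
  have hR : HasDerivAt (fun s : ℝ => (s : ℂ)) 1 t := by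
    simpa using (hasDerivAt_id t).ofReal_comp
  have hA2 : HasDerivAt (fun s : ℝ => a1 + a2 - 2 * z s) (0 - 2 * deriv z t) t :=
    (hasDerivAt_const t (a1 + a2)).sub (hz.const_mul 2)
  have hA : HasDerivAt (fun s : ℝ => y s * y s * (a1 + a2 - 2 * z s))
      ((deriv y t * y t + y t * deriv y t) * (a1 + a2 - 2 * z t)
        + y t * y t * (0 - 2 * deriv z t)) t := (hy.mul hy).mul hA2
  have hB2 : HasDerivAt (fun s : ℝ => a3 + a4 - 2 * z s) (0 - 2 * deriv z t) t :=
    (hasDerivAt_const t (a3 + a4)).sub (hz.const_mul 2)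
  have hB : HasDerivAt (fun s : ℝ => (s : ℂ) * (a3 + a4 - 2 * z s))
      (1 * (a3 + a4 - 2 * z t) + (t : ℂ) * (0 - 2 * deriv z t)) t := hR.mul hB2
  have hC2 : HasDerivAt (fun s : ℝ => (a1 + a2 + a3 + a4) + σ - 2 * z s)
      (0 - 2 * deriv z t) t :=
    (hasDerivAt_const t ((a1 + a2 + a3 + a4) + σ)).sub (hz.const_mul 2)
  have hCin : HasDerivAt
      (fun s : ℝ => σ - (s : ℂ) * ((a1 + a2 + a3 + a4) + σ - 2 * z s) + 2 * z s)
      ((0 - (1 * ((a1 + a2 + a3 + a4) + σ - 2 * z t) + (t : ℂ) * (0 - 2 * deriv z t)))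
        + 2 * deriv z t) t :=
    ((hasDerivAt_const t σ).sub (hR.mul hC2)).add (hz.const_mul 2)
  have hC : HasDerivAt
      (fun s : ℝ => y s * (σ - (s : ℂ) * ((a1 + a2 + a3 + a4) + σ - 2 * z s) + 2 * z s))
      (deriv y t * (σ - (t : ℂ) * ((a1 + a2 + a3 + a4) + σ - 2 * z t) + 2 * z t)
        + y t * ((0 - (1 * ((a1 + a2 + a3 + a4) + σ - 2 * z t)
            + (t : ℂ) * (0 - 2 * deriv z t))) + 2 * deriv z t)) t := hy.mul hCin
  have hN := (hA.add hB).add hC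
  have hD : HasDerivAt (fun s : ℝ => (s : ℂ) * ((s : ℂ) - 1))
      (1 * ((t : ℂ) - 1) + (t : ℂ) * (1 - 0)) t :=
    hR.mul (hR.sub (hasDerivAt_const t (1 : ℂ)))
  have hG := hN.div hD hDt
  have hEq : deriv y =ᶠ[nhds t]
      (fun s : ℝ => (y s * y s * (a1 + a2 - 2 * z s) + (s : ℂ) * (a3 + a4 - 2 * z s)
        + y s * (σ - (s : ℂ) * ((a1 + a2 + a3 + a4) + σ - 2 * z s) + 2 * z s))
          / ((s : ℂ) * ((s : ℂ) - 1))) := by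
    filter_upwards [hI.mem_nhds ht] with s hs
    rw [hy' s hs]; ring
  refine (hEq.deriv_eq).trans (hG.deriv.trans ?_)
  exact stmt_9_alg a1 a2 a3 a4 σ (t : ℂ) (y t) (z t) (deriv y t) (deriv z t)
    hT0 hT1 hY0 hY1 hYT (hy' t ht) (hz' t ht)
end

section
/- Let a₁, a₂, a₃ ∈ ℂ and let y, z : I → ℂ be differentiable on a real interval I with independent variable t ≠ 0, y(t) ∉ {0,1}. Set y₁ = (1−y)(z−a₂)(z−a₃) and y₂ = t(z−a₁)/(1−y). Suppose y' = ((a₂+a₃)(y−1)² − ty)/t − 2(y−1)yz/t and z' = (y₂ − y₁)/t. Then y satisfies the fifth Painlevé equation y'' = (1/(2y) + 1/(y−1))(y')² − y'/t + ((y−1)²/t²)(αy + β/y) + γy/t − (1/2)·y(y+1)/(y−1), with α = (a₂−a₃)²/2, β = −(a₂+a₃)²/2, γ = −1−2a₁. -/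
set_option maxRecDepth 100000
set_option maxHeartbeats 3200000 in
theorem key_alg (a1 a2 a3 T Y Z : ℂ) (hT : T ≠ 0) (hY : Y ≠ 0)
    (hY1 : Y - 1 ≠ 0) (h1Y : 1 - Y ≠ 0) :
    (((a2 + a3) * (2 * (Y - 1) * (((a2 + a3) * (Y - 1)^2 - T * Y) / T - 2 * (Y - 1) * Y * Z / T))
        - (1 * Y + T * (((a2 + a3) * (Y - 1)^2 - T * Y) / T - 2 * (Y - 1) * Y * Z / T))) * T
      - ((a2 + a3) * (Y - 1)^2 - T * Y) * 1) / T^2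
    - (((2 * (((a2 + a3) * (Y - 1)^2 - T * Y) / T - 2 * (Y - 1) * Y * Z / T) * Y
          + 2 * (Y - 1) * (((a2 + a3) * (Y - 1)^2 - T * Y) / T - 2 * (Y - 1) * Y * Z / T)) * Z
        + 2 * (Y - 1) * Y * ((T * (Z - a1) / (1 - Y) - (1 - Y) * (Z - a2) * (Z - a3)) / T)) * T
      - 2 * (Y - 1) * Y * Z * 1) / T^2
    = (1 / (2 * Y) + 1 / (Y - 1)) * (((a2 + a3) * (Y - 1)^2 - T * Y) / T - 2 * (Y - 1) * Y * Z / T)^2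
      - (((a2 + a3) * (Y - 1)^2 - T * Y) / T - 2 * (Y - 1) * Y * Z / T) / T
      + ((Y - 1)^2 / T^2) * (((a2 - a3)^2 / 2) * Y + (-(a2 + a3)^2 / 2) / Y)
      + (-1 - 2 * a1) * Y / T
      - (1/2) * Y * (Y + 1) / (Y - 1) := by
  field_simp
  ring


/-- eliminating `z` from the symmetric Lax isomonodromy system
yields the fifth Painlevé equation. -/
theorem stmt_10 (a1 a2 a3 : ℂ) (I : Set ℝ) (hI : IsOpen I) (y z : ℝ → ℂ)
    (hyd : ∀ t ∈ I, DifferentiableAt ℝ y t)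
    (hzd : ∀ t ∈ I, DifferentiableAt ℝ z t)
    (ht0 : ∀ t ∈ I, (t : ℂ) ≠ 0)
    (hy0 : ∀ t ∈ I, y t ≠ 0) (hy1 : ∀ t ∈ I, y t ≠ 1)
    (hy' : ∀ t ∈ I, deriv y t =
      ((a2 + a3) * (y t - 1)^2 - (t : ℂ) * y t) / (t : ℂ)
        - 2 * (y t - 1) * y t * z t / (t : ℂ))
    (hz' : ∀ t ∈ I, deriv z t =
      ((t : ℂ) * (z t - a1) / (1 - y t) - (1 - y t) * (z t - a2) * (z t - a3))
        / (t : ℂ)) :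
    ∀ t ∈ I, deriv (deriv y) t =
      (1 / (2 * y t) + 1 / (y t - 1)) * (deriv y t)^2 - deriv y t / (t : ℂ)
      + ((y t - 1)^2 / (t : ℂ)^2) *
          (((a2 - a3)^2 / 2) * y t + (-(a2 + a3)^2 / 2) / y t)
      + (-1 - 2 * a1) * y t / (t : ℂ)
      - (1/2) * y t * (y t + 1) / (y t - 1) := by
  intro t ht
  have hT : HasDerivAt (fun s : ℝ => (s : ℂ)) 1 t := by
    simpa using (hasDerivAt_id t).ofReal_comp
  have hY : HasDerivAt y (deriv y t) t := (hyd t ht).hasDerivAt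
  have hZ : HasDerivAt z (deriv z t) t := (hzd t ht).hasDerivAt
  have htne : (t : ℂ) ≠ 0 := ht0 t ht
  set Y := y t with hYdef
  set Z := z t with hZdef
  set Y' := deriv y t with hY'def
  set Z' := deriv z t with hZ'def
  have hF : HasDerivAt
      (fun s : ℝ => ((a2 + a3) * (y s - 1)^2 - (s : ℂ) * y s) / (s : ℂ)
        - 2 * (y s - 1) * y s * z s / (s : ℂ))
      ((((a2 + a3) * (2 * (Y - 1) * Y') - (1 * Y + (t : ℂ) * Y')) * (t : ℂ)
          - ((a2 + a3) * (Y - 1)^2 - (t : ℂ) * Y) * 1) / (t : ℂ)^2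
       - (((2 * Y' * Y + 2 * (Y - 1) * Y') * Z + 2 * (Y - 1) * Y * Z') * (t : ℂ)
          - 2 * (Y - 1) * Y * Z * 1) / (t : ℂ)^2) t := by
    have h1 : HasDerivAt (fun s : ℝ => (a2 + a3) * (y s - 1)^2)
        ((a2 + a3) * (2 * (Y - 1) * Y')) t := by
      have h := (((hY.sub_const 1).mul (hY.sub_const 1)).const_mul (a2 + a3))
      convert h using 2 with s
      · rfl
      all_goals (simp only [Pi.mul_apply, hYdef]; ring)
    have h2 : HasDerivAt (fun s : ℝ => (s : ℂ) * y s) (1 * Y + (t : ℂ) * Y') t :=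
      hT.mul hY
    have h3 : HasDerivAt (fun s : ℝ => 2 * (y s - 1) * y s)
        (2 * Y' * Y + 2 * (Y - 1) * Y') t := by
      have h := (((hY.sub_const 1).const_mul 2).mul hY)
      convert h using 2 with s
      · rfl
      all_goals simp only [Pi.mul_apply, hYdef]
    have h4 : HasDerivAt (fun s : ℝ => 2 * (y s - 1) * y s * z s)
        ((2 * Y' * Y + 2 * (Y - 1) * Y') * Z + 2 * (Y - 1) * Y * Z') t :=
      h3.mul hZ
    exact ((h1.sub h2).div hT htne).sub (h4.div hT htne)
  have heq : deriv y =ᶠ[nhds t]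
      (fun s : ℝ => ((a2 + a3) * (y s - 1)^2 - (s : ℂ) * y s) / (s : ℂ)
        - 2 * (y s - 1) * y s * z s / (s : ℂ)) := by
    filter_upwards [hI.mem_nhds ht] with s hs using hy' s hs
  have hdd : deriv (deriv y) t =
      (((a2 + a3) * (2 * (Y - 1) * Y') - (1 * Y + (t : ℂ) * Y')) * (t : ℂ)
          - ((a2 + a3) * (Y - 1)^2 - (t : ℂ) * Y) * 1) / (t : ℂ)^2
       - (((2 * Y' * Y + 2 * (Y - 1) * Y') * Z + 2 * (Y - 1) * Y * Z') * (t : ℂ)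
          - 2 * (Y - 1) * Y * Z * 1) / (t : ℂ)^2 := by
    rw [heq.deriv_eq]; exact hF.deriv
  have hy0' : Y ≠ 0 := hy0 t ht
  have hy1' : Y - 1 ≠ 0 := sub_ne_zero.mpr (hy1 t ht)
  have hy1'' : (1 : ℂ) - Y ≠ 0 := sub_ne_zero.mpr (Ne.symm (hy1 t ht))
  rw [hdd, hY'def, hy' t ht, hZ'def, hz' t ht]
  exact key_alg a1 a2 a3 (t : ℂ) Y Z htne hy0' hy1' hy1''
end

section
/- Let a₁, a₂ ∈ ℂ and let y, z : I → ℂ be differentiable on a real interval I with independent variable t ≠ 0 and y(t) ≠ 0. Set y₁ = t·y·(z−a₂) and y₂ = t(z−a₁)/y. Suppose y' = (y(2ty − 4z − 1) + 2t)/t and z' = 2(y₂ − y₁)/t. Then y satisfies y'' = (y')²/y − y'/t + (αy² + β)/t + γy³ + δ/y, with α = −8a₂, β = 4(1+2a₁), γ = 4, δ = −4. -/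
private lemma alg (a1 a2 T A Z Z' Y' Y'' : ℂ) (hT : T ≠ 0) (hA : A ≠ 0)
    (e1 : Y' = (A * (2 * T * A - 4 * Z - 1) + 2 * T) / T)
    (e2 : Z' = 2 * (T * (Z - a1) / A - T * A * (Z - a2)) / T)
    (e3 : Y'' = ((Y' * (2 * T * A - 4 * Z - 1)
        + A * (2 * 1 * A + 2 * T * Y' - 4 * Z') + 2 * 1) * T
        - (A * (2 * T * A - 4 * Z - 1) + 2 * T) * 1) / T ^ 2) :
    Y'' = Y' ^ 2 / A - Y' / T
      + ((-8 * a2) * A ^ 2 + 4 * (1 + 2 * a1)) / T + 4 * A ^ 3 + (-4) / A := by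
  have pe1 : T * Y' = 2 * T * A ^ 2 - 4 * A * Z - A + 2 * T := by
    rw [e1]; field_simp
  have pe2 : A * T * Z' = 2 * T * (Z - a1) - 2 * T * A ^ 2 * (Z - a2) := by
    rw [e2]; field_simp
  have pe3 : T ^ 2 * Y'' = (Y' * (2 * T * A - 4 * Z - 1)
      + A * (2 * A + 2 * T * Y' - 4 * Z') + 2) * T
      - (A * (2 * T * A - 4 * Z - 1) + 2 * T) := by
    rw [e3]; field_simp
  have pTG : T * (A * T * Y'') = T * (T * Y' ^ 2 - A * Y'
      + A * (-8 * a2 * A ^ 2 + 4 + 8 * a1) + 4 * A ^ 4 * T - 4 * T) := by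
    linear_combination (-2 * T + 2 * T * A ^ 2 - T * Y' + A) * pe1
      - 4 * A * pe2 + A * pe3
  have pG := mul_left_cancel₀ hT pTG
  have hAT : A * T ≠ 0 := mul_ne_zero hA hT
  apply mul_left_cancel₀ hAT
  rw [pG]
  field_simp
  ring

/-- eliminating `z` from the symmetric Lax isomonodromy system
yields the third Painlevé equation of type `D₆`. -/
theorem stmt_11 (a1 a2 : ℂ) (I : Set ℝ) (hI : IsOpen I) (y z : ℝ → ℂ)
    (hyd : ∀ t ∈ I, DifferentiableAt ℝ y t)
    (hzd : ∀ t ∈ I, DifferentiableAt ℝ z t)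
    (ht0 : ∀ t ∈ I, (t : ℂ) ≠ 0)
    (hy0 : ∀ t ∈ I, y t ≠ 0)
    (hy' : ∀ t ∈ I, deriv y t =
      (y t * (2 * (t : ℂ) * y t - 4 * z t - 1) + 2 * (t : ℂ)) / (t : ℂ))
    (hz' : ∀ t ∈ I, deriv z t =
      2 * ((t : ℂ) * (z t - a1) / y t - (t : ℂ) * y t * (z t - a2)) / (t : ℂ)) :
    ∀ t ∈ I, deriv (deriv y) t =
      (deriv y t)^2 / y t - deriv y t / (t : ℂ)
      + ((-8 * a2) * (y t)^2 + 4 * (1 + 2 * a1)) / (t : ℂ)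
      + 4 * (y t)^3 + (-4) / y t := by
  intro t ht
  have hmem : I ∈ nhds t := hI.mem_nhds ht
  have hcast : HasDerivAt (fun s : ℝ => (s : ℂ)) 1 t := by
    simpa using (hasDerivAt_id t).ofReal_comp
  have hy := (hyd t ht).hasDerivAt
  have hz := (hzd t ht).hasDerivAt
  have h1 : HasDerivAt (fun s : ℝ => 2 * (s : ℂ)) (2 * 1) t := hcast.const_mul 2
  have h2 := h1.mul hy
  have h3 := (h2.sub (hz.const_mul 4)).sub_const 1
  have h4 := hy.mul h3
  have h5 := h4.add h1
  have hg := h5.div hcast (ht0 t ht)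
  have heq : deriv y =ᶠ[nhds t]
      fun s => (y s * (2 * (s : ℂ) * y s - 4 * z s - 1) + 2 * (s : ℂ)) / (s : ℂ) :=
    Filter.eventually_of_mem hmem fun s hs => hy' s hs
  have hYY : deriv (deriv y) t = deriv
      (fun s => (y s * (2 * (s : ℂ) * y s - 4 * z s - 1) + 2 * (s : ℂ)) / (s : ℂ)) t :=
    Filter.EventuallyEq.deriv_eq heq
  have hg' : HasDerivAt
      (fun s => (y s * (2 * (s : ℂ) * y s - 4 * z s - 1) + 2 * (s : ℂ)) / (s : ℂ)) _ t := hg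
  rw [hYY, hg'.deriv]
  exact alg a1 a2 (t : ℂ) (y t) (z t) (deriv z t) (deriv y t) _
    (ht0 t ht) (hy0 t ht) (hy' t ht) (hz' t ht)
    (by simp only [Pi.mul_apply, Pi.sub_apply, Pi.add_apply])
end

section
/- Let a₁ ∈ ℂ and let y, z : I → ℂ be differentiable on a real interval I with independent variable t ≠ 0 and y(t) ≠ 0. Set y₁ = −y and y₂ = −t(z−a₁)/y. Suppose y' = −1 − 2yz/t and z' = (y₂ − y₁)/t. Then y satisfies y'' = (y')²/y − y'/t − 2y²/t² + β/(4t) − 1/y, with β = −4 − 8a₁. -/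
/-- eliminating `z` from the symmetric Lax isomonodromy system
yields the degenerate third Painlevé equation of type `D₇`. -/
theorem stmt_12 (a1 : ℂ) (I : Set ℝ) (hI : IsOpen I) (y z : ℝ → ℂ)
    (hyd : ∀ t ∈ I, DifferentiableAt ℝ y t)
    (hzd : ∀ t ∈ I, DifferentiableAt ℝ z t)
    (ht0 : ∀ t ∈ I, (t : ℂ) ≠ 0)
    (hy0 : ∀ t ∈ I, y t ≠ 0)
    (hy' : ∀ t ∈ I, deriv y t = -1 - 2 * y t * z t / (t : ℂ))
    (hz' : ∀ t ∈ I, deriv z t =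
      (-(t : ℂ) * (z t - a1) / y t - (-(y t))) / (t : ℂ)) :
    ∀ t ∈ I, deriv (deriv y) t =
      (deriv y t)^2 / y t - deriv y t / (t : ℂ)
      - 2 * (y t)^2 / (t : ℂ)^2 + (-4 - 8 * a1) / (4 * (t : ℂ)) - 1 / y t := by
  intro t ht
  have ht0' := ht0 t ht
  have hy0' := hy0 t ht
  have hc : HasDerivAt (fun s : ℝ => (s : ℂ)) 1 t := by
    simpa using (hasDerivAt_id t).ofReal_comp
  have hyt := (hyd t ht).hasDerivAt
  have hzt := (hzd t ht).hasDerivAt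
  have h1 : HasDerivAt (fun s : ℝ => 2 * y s * z s)
      (2 * deriv y t * z t + 2 * y t * deriv z t) t := by
    have := ((hyt.const_mul (2 : ℂ)).mul hzt)
    exact this
  have h2 := h1.div hc ht0'
  have hg : HasDerivAt (fun s : ℝ => -1 - 2 * y s * z s / (s : ℂ))
      (-(((2 * deriv y t * z t + 2 * y t * deriv z t) * (t : ℂ)
        - 2 * y t * z t * 1) / (t : ℂ) ^ 2)) t := by
    simpa using h2.const_sub (-1 : ℂ)
  have heq : deriv y =ᶠ[nhds t] fun s : ℝ => -1 - 2 * y s * z s / (s : ℂ) := by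
    filter_upwards [hI.mem_nhds ht] with s hs using hy' s hs
  have hdd : deriv (deriv y) t
      = -(((2 * deriv y t * z t + 2 * y t * deriv z t) * (t : ℂ)
        - 2 * y t * z t * 1) / (t : ℂ) ^ 2) := by
    rw [heq.deriv_eq]; exact hg.deriv
  rw [hdd, hz' t ht, hy' t ht]
  field_simp
  ring_nf
end
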